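/- Let δ ∈ (0,1) satisfy 8√(2δ) + 16δ ≤ 1/4, and let Φ = (φ_1,…,φ_m) be a δ-admissible system of unit vectors in ℝ^d. Then for all nonzero x, y ∈ ℝ^d with d(x̂,ŷ) ≤ δ, one has (1/m)Σ_{i=1}^m (|σ(⟨x,φ_i⟩) − σ(⟨y,φ_i⟩)|² − 1)·⟨x−y,φ_i⟩² ≤ −‖x−y‖²/(4d). -/

import Mathlib

open InnerProductGeometry Finset
open scoped RealInnerProductSpace Classical

/-- The sign function with the convention `σ(w) = 1` if `w ≥ 0` and `σ(w) = -1` if `w < 0`. -/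
noncomputable def sgn (w : ℝ) : ℝ := if 0 ≤ w then 1 else -1

/-- A system `Φ = (φ_1, …, φ_m)` of unit vectors in `ℝ^d` is `δ`-admissible if:
(1) for all nonzero `x, y`, the fraction of indices with `σ(⟨x,φ_i⟩) ≠ σ(⟨y,φ_i⟩)` is at
most `δ + θ_{x,y}/π`; (2) `‖z‖²/(2d) ≤ (1/m)Σ⟨z,φ_i⟩² ≤ 3‖z‖²/(2d)` for all `z`;
(3) `(1/m)Σ ⟨z,φ_i⟩⁴·1{⟨z,φ_i⟩² ≤ ‖z‖²/(δd)} ≤ 4‖z‖⁴/d²` for all `z`;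
(4) `(1/m)Σ ⟨z,φ_i⟩²·1{⟨z,φ_i⟩² > ‖z‖²/(δd)} ≤ 4δ‖z‖²/d` for all `z`. -/
def IsAdmissible (d m : ℕ) (δ : ℝ) (Φ : Fin m → EuclideanSpace ℝ (Fin d)) : Prop :=
  (∀ i, ‖Φ i‖ = 1) ∧
  (∀ x y : EuclideanSpace ℝ (Fin d), x ≠ 0 → y ≠ 0 →
    ((univ.filter fun i => sgn ⟪x, Φ i⟫ ≠ sgn ⟪y, Φ i⟫).card : ℝ) / m
      ≤ δ + angle x y / Real.pi) ∧
  (∀ z : EuclideanSpace ℝ (Fin d),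
    ‖z‖ ^ 2 / (2 * d) ≤ (1 / m : ℝ) * ∑ i, ⟪z, Φ i⟫ ^ 2 ∧
    (1 / m : ℝ) * ∑ i, ⟪z, Φ i⟫ ^ 2 ≤ 3 * ‖z‖ ^ 2 / (2 * d)) ∧
  (∀ z : EuclideanSpace ℝ (Fin d),
    (1 / m : ℝ) * ∑ i, (if ⟪z, Φ i⟫ ^ 2 ≤ ‖z‖ ^ 2 / (δ * d) then ⟪z, Φ i⟫ ^ 4 else 0)
      ≤ 4 * ‖z‖ ^ 4 / d ^ 2) ∧
  (∀ z : EuclideanSpace ℝ (Fin d),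
    (1 / m : ℝ) * ∑ i, (if ‖z‖ ^ 2 / (δ * d) < ⟪z, Φ i⟫ ^ 2 then ⟪z, Φ i⟫ ^ 2 else 0)
      ≤ 4 * δ * ‖z‖ ^ 2 / d)

set_option maxHeartbeats 1000000 in
/-- If `8√(2δ) + 16δ ≤ 1/4` and `Φ` is a `δ`-admissible system of unit
vectors, then for all nonzero `x, y` with `θ_{x,y}/π ≤ δ`,
`(1/m)Σ_i (|σ(⟨x,φ_i⟩) − σ(⟨y,φ_i⟩)|² − 1)·⟨x−y,φ_i⟩² ≤ −‖x−y‖²/(4d)`. -/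
theorem admissible_implies_drift_bound (d m : ℕ) (δ : ℝ) (hδ : δ ∈ Set.Ioo (0 : ℝ) 1)
    (hδsmall : 8 * Real.sqrt (2 * δ) + 16 * δ ≤ 1 / 4)
    (Φ : Fin m → EuclideanSpace ℝ (Fin d)) (hΦ : IsAdmissible d m δ Φ)
    (x y : EuclideanSpace ℝ (Fin d)) (hx : x ≠ 0) (hy : y ≠ 0)
    (hclose : angle x y / Real.pi ≤ δ) :
    (1 / m : ℝ) * ∑ i, ((sgn ⟪x, Φ i⟫ - sgn ⟪y, Φ i⟫) ^ 2 - 1) * ⟪x - y, Φ i⟫ ^ 2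
      ≤ -(‖x - y‖ ^ 2 / (4 * d)) := by
  classical
  obtain ⟨hunit, h1, h2, h3, h4⟩ := hΦ
  have hδ0 : 0 < δ := hδ.1
  have hd : 0 < (d : ℝ) := by
    rcases Nat.eq_zero_or_pos d with hd0 | hd0
    · subst hd0; exact absurd (Subsingleton.elim x 0) hx
    · exact_mod_cast hd0
  have hm : 0 < (m : ℝ) := by
    rcases Nat.eq_zero_or_pos m with hm0 | hm0
    · exfalso
      subst hm0
      have h := (h2 x).1
      simp at h
      have hxpos : 0 < ‖x‖ ^ 2 := by
        have := norm_pos_iff.mpr hx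
        positivity
      have : 0 < ‖x‖ ^ 2 / (2 * (d:ℝ)) := by positivity
      linarith
    · exact_mod_cast hm0
  set z := x - y with hz
  set S : Finset (Fin m) := univ.filter fun i => sgn ⟪x, Φ i⟫ ≠ sgn ⟪y, Φ i⟫ with hS
  set K : ℝ := ‖z‖ ^ 2 / (δ * d) with hK
  set T : Finset (Fin m) := S.filter fun i => ⟪z, Φ i⟫ ^ 2 ≤ K with hT
  -- pointwise identity
  have key : ∀ i, ((sgn ⟪x, Φ i⟫ - sgn ⟪y, Φ i⟫) ^ 2 - 1) * ⟪z, Φ i⟫ ^ 2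
      = (if sgn ⟪x, Φ i⟫ ≠ sgn ⟪y, Φ i⟫ then 4 * ⟪z, Φ i⟫ ^ 2 else 0) - ⟪z, Φ i⟫ ^ 2 := by
    intro i
    have hs : ∀ w : ℝ, sgn w = 1 ∨ sgn w = -1 := fun w => by
      unfold sgn; split_ifs <;> simp
    rcases hs ⟪x, Φ i⟫ with ha | ha <;> rcases hs ⟪y, Φ i⟫ with hb | hb <;>
      rw [ha, hb] <;>
      [rw [if_neg (by norm_num)]; rw [if_pos (by norm_num)];
       rw [if_pos (by norm_num)]; rw [if_neg (by norm_num)]] <;> ring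
  have hsum : ∑ i, ((sgn ⟪x, Φ i⟫ - sgn ⟪y, Φ i⟫) ^ 2 - 1) * ⟪z, Φ i⟫ ^ 2
      = 4 * (∑ i ∈ S, ⟪z, Φ i⟫ ^ 2) - ∑ i, ⟪z, Φ i⟫ ^ 2 := by
    simp only [key]
    rw [Finset.sum_sub_distrib]
    congr 1
    rw [Finset.mul_sum, hS, Finset.sum_filter]
  -- card bounds
  have hScard : (S.card : ℝ) ≤ 2 * δ * m := by
    have h := h1 x y hx hy
    rw [div_le_iff₀ hm] at h
    nlinarith [h]
  have hTcard : (T.card : ℝ) ≤ 2 * δ * m := by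
    have : (T.card : ℝ) ≤ (S.card : ℝ) := by
      exact_mod_cast Finset.card_le_card (Finset.filter_subset _ _)
    linarith
  -- split the S-sum
  have hsplit : ∑ i ∈ S, ⟪z, Φ i⟫ ^ 2
      ≤ (∑ i ∈ T, ⟪z, Φ i⟫ ^ 2) + ∑ i, (if K < ⟪z, Φ i⟫ ^ 2 then ⟪z, Φ i⟫ ^ 2 else 0) := by
    have heq : ∑ i ∈ S, ⟪z, Φ i⟫ ^ 2
        = (∑ i ∈ T, ⟪z, Φ i⟫ ^ 2) + ∑ i ∈ S, (if K < ⟪z, Φ i⟫ ^ 2 then ⟪z, Φ i⟫ ^ 2 else 0) := by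
      have e : ∀ i ∈ S, ⟪z, Φ i⟫ ^ 2
          = (if ⟪z, Φ i⟫ ^ 2 ≤ K then ⟪z, Φ i⟫ ^ 2 else 0)
            + (if K < ⟪z, Φ i⟫ ^ 2 then ⟪z, Φ i⟫ ^ 2 else 0) := by
        intro i _
        by_cases h : ⟪z, Φ i⟫ ^ 2 ≤ K
        · rw [if_pos h, if_neg (not_lt.mpr h), add_zero]
        · rw [if_neg h, if_pos (not_le.mp h), zero_add]
      rw [Finset.sum_congr rfl e, Finset.sum_add_distrib, hT]
      congr 1
      exact (Finset.sum_filter _ _).symm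
    rw [heq]
    apply add_le_add_right
    apply Finset.sum_le_sum_of_subset_of_nonneg (Finset.subset_univ S)
    intro i _ _
    split_ifs with h
    · positivity
    · exact le_rfl
  -- large part bound
  have hlarge : (1 / (m:ℝ)) * ∑ i, (if K < ⟪z, Φ i⟫ ^ 2 then ⟪z, Φ i⟫ ^ 2 else 0)
      ≤ 4 * δ * ‖z‖ ^ 2 / d := h4 z
  -- small part: Cauchy-Schwarz
  have hcauchy : (∑ i ∈ T, ⟪z, Φ i⟫ ^ 2) ^ 2
      ≤ (T.card : ℝ) * ∑ i ∈ T, ⟪z, Φ i⟫ ^ 4 := by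
    have h := Finset.sum_mul_sq_le_sq_mul_sq T (fun _ => (1:ℝ)) (fun i => ⟪z, Φ i⟫ ^ 2)
    simp only [one_mul, one_pow, Finset.sum_const, nsmul_eq_mul, mul_one] at h
    calc (∑ i ∈ T, ⟪z, Φ i⟫ ^ 2) ^ 2 ≤ (T.card : ℝ) * ∑ i ∈ T, (⟪z, Φ i⟫ ^ 2) ^ 2 := h
      _ = (T.card : ℝ) * ∑ i ∈ T, ⟪z, Φ i⟫ ^ 4 := by
          congr 1; exact Finset.sum_congr rfl fun i _ => by ring
  have hT4 : ∑ i ∈ T, ⟪z, Φ i⟫ ^ 4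
      ≤ ∑ i, (if ⟪z, Φ i⟫ ^ 2 ≤ K then ⟪z, Φ i⟫ ^ 4 else 0) := by
    rw [← Finset.sum_filter]
    apply Finset.sum_le_sum_of_subset_of_nonneg
    · intro i hi
      simp only [hT, Finset.mem_filter] at hi ⊢
      exact ⟨Finset.mem_univ i, hi.2⟩
    · intro i _ _; positivity
  have h3z : (1 / (m:ℝ)) * ∑ i, (if ⟪z, Φ i⟫ ^ 2 ≤ K then ⟪z, Φ i⟫ ^ 4 else 0)
      ≤ 4 * ‖z‖ ^ 4 / d ^ 2 := h3 z
  have hT4' : ∑ i ∈ T, ⟪z, Φ i⟫ ^ 4 ≤ 4 * ‖z‖ ^ 4 / (d:ℝ) ^ 2 * m := by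
    have h' : ∑ i, (if ⟪z, Φ i⟫ ^ 2 ≤ K then ⟪z, Φ i⟫ ^ 4 else 0)
        ≤ 4 * ‖z‖ ^ 4 / (d:ℝ) ^ 2 * m := by
      rw [one_div, inv_mul_le_iff₀ hm] at h3z
      linarith [h3z]
    linarith
  have hTnonneg : 0 ≤ ∑ i ∈ T, ⟪z, Φ i⟫ ^ 2 :=
    Finset.sum_nonneg fun i _ => sq_nonneg _
  have hsq : ((1 / (m:ℝ)) * ∑ i ∈ T, ⟪z, Φ i⟫ ^ 2) ^ 2
      ≤ 2 * δ * (4 * ‖z‖ ^ 4 / (d:ℝ) ^ 2) := by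
    have hT4nonneg : 0 ≤ ∑ i ∈ T, ⟪z, Φ i⟫ ^ 4 :=
      Finset.sum_nonneg fun i _ => by positivity
    have hstep : (∑ i ∈ T, ⟪z, Φ i⟫ ^ 2) ^ 2
        ≤ 2 * δ * (4 * ‖z‖ ^ 4 / (d:ℝ) ^ 2) * m ^ 2 := by
      nlinarith [hcauchy, hT4', hTcard, hT4nonneg, Nat.cast_nonneg (α := ℝ) T.card, hm]
    have : ((1 / (m:ℝ)) * ∑ i ∈ T, ⟪z, Φ i⟫ ^ 2) ^ 2
        = (∑ i ∈ T, ⟪z, Φ i⟫ ^ 2) ^ 2 / m ^ 2 := by field_simp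
    rw [this, div_le_iff₀ (by positivity)]
    linarith
  have hsmall : (1 / (m:ℝ)) * ∑ i ∈ T, ⟪z, Φ i⟫ ^ 2
      ≤ Real.sqrt (2 * δ) * (2 * ‖z‖ ^ 2 / d) := by
    have hnn : 0 ≤ (1 / (m:ℝ)) * ∑ i ∈ T, ⟪z, Φ i⟫ ^ 2 := by positivity
    calc (1 / (m:ℝ)) * ∑ i ∈ T, ⟪z, Φ i⟫ ^ 2
        = Real.sqrt (((1 / (m:ℝ)) * ∑ i ∈ T, ⟪z, Φ i⟫ ^ 2) ^ 2) := (Real.sqrt_sq hnn).symm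
      _ ≤ Real.sqrt (2 * δ * (4 * ‖z‖ ^ 4 / (d:ℝ) ^ 2)) := Real.sqrt_le_sqrt hsq
      _ = Real.sqrt (2 * δ) * (2 * ‖z‖ ^ 2 / d) := by
          rw [show 2 * δ * (4 * ‖z‖ ^ 4 / (d:ℝ) ^ 2) = (2 * δ) * (2 * ‖z‖ ^ 2 / (d:ℝ)) ^ 2 by
            field_simp; ring]
          rw [Real.sqrt_mul (by positivity), Real.sqrt_sq (by positivity)]
  -- assemble
  have hB : ‖z‖ ^ 2 / (2 * (d:ℝ)) ≤ (1 / (m:ℝ)) * ∑ i, ⟪z, Φ i⟫ ^ 2 := (h2 z).1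
  have hAle : (1 / (m:ℝ)) * ∑ i ∈ S, ⟪z, Φ i⟫ ^ 2
      ≤ Real.sqrt (2 * δ) * (2 * ‖z‖ ^ 2 / d) + 4 * δ * ‖z‖ ^ 2 / d := by
    have h' := mul_le_mul_of_nonneg_left hsplit (le_of_lt (by positivity : (0:ℝ) < 1 / m))
    have hexp : (1 / (m:ℝ)) * ((∑ i ∈ T, ⟪z, Φ i⟫ ^ 2)
          + ∑ i, (if K < ⟪z, Φ i⟫ ^ 2 then ⟪z, Φ i⟫ ^ 2 else 0))
        = (1 / (m:ℝ)) * (∑ i ∈ T, ⟪z, Φ i⟫ ^ 2)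
          + (1 / (m:ℝ)) * ∑ i, (if K < ⟪z, Φ i⟫ ^ 2 then ⟪z, Φ i⟫ ^ 2 else 0) := by ring
    rw [hexp] at h'
    linarith
  have hZD : (0:ℝ) ≤ ‖z‖ ^ 2 / d := by positivity
  have hprod := mul_le_mul_of_nonneg_right hδsmall hZD
  rw [hsum]
  have hgoal : (1 / (m:ℝ)) * (4 * (∑ i ∈ S, ⟪z, Φ i⟫ ^ 2) - ∑ i, ⟪z, Φ i⟫ ^ 2)
      = 4 * ((1 / (m:ℝ)) * ∑ i ∈ S, ⟪z, Φ i⟫ ^ 2)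
        - (1 / (m:ℝ)) * ∑ i, ⟪z, Φ i⟫ ^ 2 := by ring
  rw [hgoal]
  have e1 : Real.sqrt (2 * δ) * (2 * ‖z‖ ^ 2 / (d:ℝ))
      = 2 * (Real.sqrt (2 * δ) * (‖z‖ ^ 2 / d)) := by ring
  have e2 : (8 * Real.sqrt (2 * δ) + 16 * δ) * (‖z‖ ^ 2 / (d:ℝ))
      = 8 * (Real.sqrt (2 * δ) * (‖z‖ ^ 2 / d)) + 16 * (δ * (‖z‖ ^ 2 / d)) := by ring
  have e3 : 4 * δ * ‖z‖ ^ 2 / (d:ℝ) = 4 * (δ * (‖z‖ ^ 2 / d)) := by ring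
  have e4 : ‖z‖ ^ 2 / (2 * (d:ℝ)) = (1/2) * (‖z‖ ^ 2 / d) := by ring
  have e5 : -(‖z‖ ^ 2 / (4 * (d:ℝ))) = -(1/4) * (‖z‖ ^ 2 / d) := by ring
  have e6 : (1/4 : ℝ) * (‖z‖ ^ 2 / (d:ℝ)) = (1/4) * (‖z‖ ^ 2 / d) := rfl
  rw [e1] at hsmall
  rw [e2] at hprod
  rw [e3] at hlarge hAle
  rw [e1] at hAle
  rw [e4] at hB
  rw [e5]
  linarith [hAle, hB, hprod]
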